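/- For words u and v of length at most 2k-1 over an alphabet, u is k-abelian equivalent to v if and only if u = v. -/

import Mathlib

/-- Number of occurrences of `w` as a (contiguous) factor of `u`. -/
def occ {A : Type*} [DecidableEq A] (w u : List A) : ℕ :=
  ((Finset.range (u.length + 1 - w.length)).filter
    (fun i => (u.drop i).take w.length = w)).card

/-- `k`-abelian equivalence: equal numbers of occurrences of every nonempty
word of length at most `k`. -/
def KAbelianEq {A : Type*} [DecidableEq A] (k : ℕ) (u v : List A) : Prop :=
  ∀ w : List A, w ≠ [] → w.length ≤ k → occ w u = occ w v

lemma occ_cons {A : Type*} [DecidableEq A] (w : List A) (b : A) (t : List A) :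
    occ w (b :: t) = occ w t + if (b :: t).take w.length = w then 1 else 0 := by
  unfold occ
  rcases le_or_gt w.length (t.length + 1) with h | h
  · have h2 : (b :: t).length + 1 - w.length = (t.length + 1 - w.length) + 1 := by
      simp only [List.length_cons]; omega
    rw [h2, Finset.card_filter, Finset.card_filter, Finset.sum_range_succ']
    simp [List.drop_succ_cons]
  · have h2 : (b :: t).length + 1 - w.length = 0 := by simp only [List.length_cons]; omega
    have h3 : t.length + 1 - w.length = 0 := by omega
    have h4 : (b :: t).take w.length = b :: t := by
      apply List.take_of_length_le; simp only [List.length_cons]; omega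
    rw [h2, h3, h4]
    have hne : ¬ (b :: t = w) := by
      intro e; apply absurd (congrArg List.length e); simp only [List.length_cons]; omega
    simp [hne]

lemma occ_nil {A : Type*} [DecidableEq A] (w : List A) (hw : w ≠ []) : occ w [] = 0 := by
  unfold occ
  have h : ([] : List A).length + 1 - w.length = 0 := by
    have : 1 ≤ w.length := List.length_pos_iff.mpr hw
    simp only [List.length_nil]; omega
  rw [h]; simp

lemma occ_count {A : Type*} [DecidableEq A] (a : A) (u : List A) :
    occ [a] u = u.count a := by
  induction u with
  | nil => rw [occ_nil _ (by simp)]; simp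
  | cons b t ih =>
    rw [occ_cons, ih]
    simp only [List.length_singleton, List.take_cons, List.count_cons, List.take_zero]
    rcases eq_or_ne b a with rfl | hne
    · simp
    · simp [hne, Ne.symm hne]

lemma ext_left {A : Type*} [DecidableEq A] (w : List A) (hw : w ≠ []) (s : Finset A)
    (u : List A) (hs : ∀ b ∈ u, b ∈ s) :
    (∑ a ∈ s, occ (a :: w) u) + (if u.take w.length = w then 1 else 0) = occ w u := by
  induction u with
  | nil =>
    rw [occ_nil w hw]
    have h1 : ∀ a ∈ s, occ (a :: w) ([] : List A) = 0 := fun a _ => occ_nil _ (by simp)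
    rw [Finset.sum_congr rfl h1]
    have : ([] : List A).take w.length = [] := by simp
    rw [this]
    simp [Ne.symm hw]
  | cons b t ih =>
    have hb : b ∈ s := hs b (by simp)
    have hts : ∀ x ∈ t, x ∈ s := fun x hx => hs x (by simp [hx])
    rw [occ_cons w b t]
    have h1 : ∀ a ∈ s, occ (a :: w) (b :: t)
        = occ (a :: w) t + if (b :: t).take (a :: w).length = (a :: w) then 1 else 0 :=
      fun a _ => occ_cons _ b t
    rw [Finset.sum_congr rfl h1, Finset.sum_add_distrib]
    have h2 : (∑ a ∈ s, if (b :: t).take (a :: w).length = (a :: w) then 1 else 0)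
        = if t.take w.length = w then 1 else 0 := by
      have h3 : ∀ a : A, ((b :: t).take (a :: w).length = (a :: w)) ↔ (b = a ∧ t.take w.length = w) := by
        intro a
        simp only [List.length_cons, List.take_succ_cons, List.cons.injEq]
      simp only [h3]
      by_cases ht : t.take w.length = w
      · simp only [ht, and_true]
        rw [Finset.sum_ite_eq s b (fun _ => (1:ℕ))]
        simp [hb, ht]
      · simp [ht]
    rw [h2]
    have := ih hts
    omega

lemma rev_window {A : Type*} (u : List A) (i m : ℕ) (h : i + m ≤ u.length) :
    ((u.drop i).take m).reverse = (u.reverse.drop (u.length - i - m)).take m := by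
  rw [List.reverse_take, List.reverse_drop, List.drop_take]
  congr 1
  · simp [List.length_drop]; omega
  · congr 1
    simp [List.length_drop]

lemma occ_reverse {A : Type*} [DecidableEq A] (w u : List A) :
    occ w.reverse u.reverse = occ w u := by
  unfold occ
  simp only [List.length_reverse]
  rcases le_or_gt w.length u.length with h | h
  · apply Finset.card_bij' (fun i _ => u.length - w.length - i) (fun i _ => u.length - w.length - i)
    · intro a ha
      simp only [Finset.mem_filter, Finset.mem_range] at ha ⊢
      obtain ⟨ha1, ha2⟩ := ha
      refine ⟨by omega, ?_⟩
      have hj : u.length - (u.length - w.length - a) - w.length = a := by omega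
      have := rev_window u (u.length - w.length - a) w.length (by omega)
      rw [hj] at this
      rw [← List.reverse_inj, this, ha2]
    · intro a ha
      simp only [Finset.mem_filter, Finset.mem_range] at ha ⊢
      obtain ⟨ha1, ha2⟩ := ha
      refine ⟨by omega, ?_⟩
      have := rev_window u a w.length (by omega)
      rw [ha2] at this
      have he : u.length - a - w.length = u.length - w.length - a := by omega
      rw [he] at this
      exact this.symm
    · intro a ha; simp only [Finset.mem_filter, Finset.mem_range] at ha; omega
    · intro a ha; simp only [Finset.mem_filter, Finset.mem_range] at ha; omega
  · have : u.length + 1 - w.length = 0 := by omega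
    rw [this]
    simp

lemma take_indicator {A : Type*} [DecidableEq A] {k : ℕ} {u v : List A}
    (h : KAbelianEq k u v) (w : List A) (hw : w ≠ []) (hwk : w.length + 1 ≤ k)
    (hut : u.take w.length = w) : v.take w.length = w := by
  classical
  set s := u.toFinset ∪ v.toFinset with hsdef
  have Hu := ext_left w hw s u (fun b hb => Finset.mem_union_left _ (List.mem_toFinset.mpr hb))
  have Hv := ext_left w hw s v (fun b hb => Finset.mem_union_right _ (List.mem_toFinset.mpr hb))
  have hsum : (∑ a ∈ s, occ (a :: w) u) = ∑ a ∈ s, occ (a :: w) v :=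
    Finset.sum_congr rfl (fun a _ => h (a :: w) (by simp) (by simp only [List.length_cons]; omega))
  have hocc : occ w u = occ w v := h w hw (by omega)
  rw [if_pos hut] at Hu
  by_contra hvt
  rw [if_neg hvt] at Hv
  omega

lemma take_eq_take {A : Type*} [DecidableEq A] {k : ℕ} {u v : List A}
    (h : KAbelianEq k u v) (hlen : u.length = v.length) {m : ℕ} (hm : m + 1 ≤ k) :
    u.take m = v.take m := by
  rcases Nat.eq_zero_or_pos m with rfl | hm0
  · simp
  by_cases hum : m ≤ u.length
  · have hwlen : (u.take m).length = m := by rw [List.length_take]; omega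
    have hw : u.take m ≠ [] := by
      intro e; rw [e] at hwlen; simp at hwlen; omega
    have := take_indicator h (u.take m) hw (by omega) (by rw [hwlen])
    rw [hwlen] at this
    exact this.symm
  · push_neg at hum
    have hu : u.take m = u := List.take_of_length_le (by omega)
    have hv : v.take m = v := List.take_of_length_le (by omega)
    rw [hu, hv]
    rcases List.eq_nil_or_concat u with rfl | _
    · exact (List.eq_nil_of_length_eq_zero hlen.symm).symm
    · have hune : u ≠ [] := by rintro rfl; simp_all
      have := take_indicator h u hune (by omega) List.take_length
      rw [hlen, List.take_length] at this
      exact this.symm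

lemma kab_reverse {A : Type*} [DecidableEq A] {k : ℕ} {u v : List A}
    (h : KAbelianEq k u v) : KAbelianEq k u.reverse v.reverse := by
  intro w hw hwk
  have h1 : occ w u.reverse = occ w.reverse u := by
    have := occ_reverse w.reverse u
    rwa [List.reverse_reverse] at this
  have h2 : occ w v.reverse = occ w.reverse v := by
    have := occ_reverse w.reverse v
    rwa [List.reverse_reverse] at this
  rw [h1, h2]
  exact h w.reverse (by simpa using hw) (by simpa using hwk)

lemma drop_eq_drop {A : Type*} [DecidableEq A] {k : ℕ} {u v : List A}
    (h : KAbelianEq k u v) (hlen : u.length = v.length) {m : ℕ} (hm : m + 1 ≤ k) :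
    u.drop (u.length - m) = v.drop (v.length - m) := by
  have h' := kab_reverse h
  have ht : u.reverse.take m = v.reverse.take m :=
    take_eq_take h' (by simpa using hlen) hm
  have e1 : (u.reverse.take m).reverse = u.drop (u.length - m) := by
    rw [List.take_reverse, List.reverse_reverse]
  have e2 : (v.reverse.take m).reverse = v.drop (v.length - m) := by
    rw [List.take_reverse, List.reverse_reverse]
  rw [← e1, ← e2, ht]

theorem kabelian_eq_iff_eq_of_short {A : Type*} [DecidableEq A] (k : ℕ) (hk : 1 ≤ k)
    (u v : List A) (hu : u.length ≤ 2 * k - 1) (hv : v.length ≤ 2 * k - 1) :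
    KAbelianEq k u v ↔ u = v := by
  constructor
  · intro h
    have hperm : u.Perm v := List.perm_iff_count.mpr (fun a => by
      rw [← occ_count, ← occ_count]
      exact h [a] (by simp) (by simpa using hk))
    have hlen : u.length = v.length := hperm.length_eq
    by_cases hn : u.length + 1 ≤ k
    · have := take_eq_take h hlen hn (m := u.length)
      rwa [List.take_length, hlen, List.take_length] at this
    · push_neg at hn
      have hk1 : k ≤ u.length := by omega
      have hP : u.take (k-1) = v.take (k-1) := take_eq_take h hlen (by omega)
      by_cases hs : u.length ≤ 2*k - 2
      · have hd := drop_eq_drop h hlen (m := u.length - (k-1)) (by omega)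
        have e1 : u.length - (u.length - (k-1)) = k-1 := by omega
        have e2 : v.length - (u.length - (k-1)) = k-1 := by omega
        rw [e1, e2] at hd
        calc u = u.take (k-1) ++ u.drop (k-1) := (List.take_append_drop _ u).symm
        _ = v.take (k-1) ++ v.drop (k-1) := by rw [hP, hd]
        _ = v := List.take_append_drop _ v
      · have hn2 : u.length = 2*k - 1 := by omega
        have hT : u.drop k = v.drop k := by
          have hd := drop_eq_drop h hlen (m := k-1) (by omega)
          have e1 : u.length - (k-1) = k := by omega
          have e2 : v.length - (k-1) = k := by omega
          rwa [e1, e2] at hd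
        have hku : k - 1 < u.length := by omega
        have hkv : k - 1 < v.length := by omega
        have h1u : u.drop (k-1) = u[k-1] :: u.drop k := by
          rw [List.drop_eq_getElem_cons hku, Nat.sub_add_cancel hk]
        have h1v : v.drop (k-1) = v[k-1] :: v.drop k := by
          rw [List.drop_eq_getElem_cons hkv, Nat.sub_add_cancel hk]
        have hd_perm : (u.drop (k-1)).Perm (v.drop (k-1)) := by
          have hp := hperm
          rw [← List.take_append_drop (k-1) u, ← List.take_append_drop (k-1) v, hP] at hp
          exact (List.perm_append_left_iff _).mp hp
        rw [h1u, h1v, hT] at hd_perm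
        have hmid : u[k-1] = v[k-1] := by
          have hc := List.perm_iff_count.mp hd_perm u[k-1]
          simp only [List.count_cons] at hc
          by_contra hne
          simp [Ne.symm hne] at hc
        calc u = u.take (k-1) ++ u.drop (k-1) := (List.take_append_drop _ u).symm
        _ = v.take (k-1) ++ v.drop (k-1) := by rw [h1u, h1v, hP, hT, hmid]
        _ = v := List.take_append_drop _ v
  · rintro rfl
    intro w _ _
    rfl
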